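/- Let k ≥ 2 be an integer and G a group containing elements T₀, T₁, …, T_k such that TᵢTⱼTᵢ = TⱼTᵢTⱼ whenever |i−j| = 1 and TᵢTⱼ = TⱼTᵢ whenever |i−j| ≥ 2. Set x = T₀ and y = T₁T₂⋯T_k. Then prod(x,y;2k+4) = prod(y,x;2k+4), i.e., x and y satisfy the Artin relation of length 2k+4. -/

import Mathlib

/-- `altProd a b ℓ` is the alternating product `a * b * a * ⋯` with `ℓ` factors, starting with `a`. -/
def altProd {G : Type*} [Monoid G] : G → G → ℕ → G
  | _, _, 0 => 1
  | a, b, n + 1 => a * altProd b a n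

private lemma artin_altProd_two_mul {G : Type*} [Monoid G] (a b : G) (m : ℕ) :
    altProd a b (2 * m) = (a * b) ^ m := by
  induction m generalizing a b with
  | zero => simp [altProd]
  | succ n ih =>
      have h : 2 * (n + 1) = 2 * n + 1 + 1 := by ring
      rw [h, altProd, altProd, ih, pow_succ', mul_assoc]

private lemma artin_conj_pow {G : Type*} [Monoid G] (a b : G) : ∀ n : ℕ,
    (a * b) ^ n * a = a * (b * a) ^ n
  | 0 => by simp
  | n + 1 => by
      rw [pow_succ', mul_assoc, artin_conj_pow a b n, pow_succ', ← mul_assoc, ← mul_assoc,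
        ← mul_assoc]

private lemma artin_comm_list {G : Type*} [Monoid G] (T : ℕ → G) (g : G) :
    ∀ l : List ℕ, (∀ j ∈ l, g * T j = T j * g) →
      g * (l.map T).prod = (l.map T).prod * g
  | [], _ => by simp
  | a :: l, h => by
      simp only [List.map_cons, List.prod_cons]
      calc g * (T a * (l.map T).prod) = (g * T a) * (l.map T).prod := by rw [mul_assoc]
        _ = (T a * g) * (l.map T).prod := by rw [h a List.mem_cons_self]
        _ = T a * (g * (l.map T).prod) := by rw [mul_assoc]
        _ = T a * ((l.map T).prod * g) := by
              rw [artin_comm_list T g l (fun j hj => h j (List.mem_cons_of_mem a hj))]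
        _ = T a * (l.map T).prod * g := by rw [mul_assoc]

/-- product of the first `m` generators -/
private def artinDel {G : Type*} [Monoid G] (T : ℕ → G) (m : ℕ) : G :=
  ((List.range m).map T).prod

private lemma artinDel_succ {G : Type*} [Monoid G] (T : ℕ → G) (m : ℕ) :
    artinDel T (m + 1) = artinDel T m * T m := by
  simp [artinDel, List.range_succ]

/-- `T i` (for `i + 1 ≤ k`) commutes with the product of generators of index `< min i (i+2)`,
   more generally with products of generators all of whose indices differ by ≥ 2. -/
private lemma artin_comm_del {G : Type*} [Group G] {k : ℕ} (T : ℕ → G)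
    (hcomm : ∀ i j, i + 2 ≤ j → j ≤ k → T i * T j = T j * T i)
    (m i : ℕ) (hmi : m + 1 ≤ i) (hik : i ≤ k) :
    T i * artinDel T m = artinDel T m * T i := by
  apply artin_comm_list
  intro j hj
  have hj' : j < m := List.mem_range.mp hj
  exact (hcomm j i (by omega) hik).symm

/-- The shift relation: `δ_m * T i = T (i+1) * δ_m` for `i + 2 ≤ m ≤ k + 1`. -/
private lemma artin_shift {G : Type*} [Group G] {k : ℕ} (T : ℕ → G)
    (hbraid : ∀ i, i + 1 ≤ k → T i * T (i + 1) * T i = T (i + 1) * T i * T (i + 1))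
    (hcomm : ∀ i j, i + 2 ≤ j → j ≤ k → T i * T j = T j * T i)
    (i m : ℕ) (h2 : i + 2 ≤ m) (hm : m ≤ k + 1) :
    artinDel T m * T i = T (i + 1) * artinDel T m := by
  obtain ⟨r, rfl⟩ := Nat.exists_eq_add_of_le h2
  have hik : i + 1 ≤ k := by omega
  -- split δ_(i+2+r) = δ_(i+2) * tail
  set tail : G := (((List.range r).map (fun x => i + 2 + x)).map T).prod with htail
  have hsplit : artinDel T (i + 2 + r) = artinDel T (i + 2) * tail := by
    simp [artinDel, List.range_add, htail, List.map_map, Function.comp, mul_assoc]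
  have htc : T i * tail = tail * T i := by
    apply artin_comm_list
    intro j hj
    simp only [List.mem_map, List.mem_range] at hj
    obtain ⟨j', hj', rfl⟩ := hj
    exact hcomm i (i + 2 + j') (by omega) (by omega)
  have hdecomp : artinDel T (i + 2) = artinDel T i * T i * T (i + 1) := by
    rw [show i + 2 = i + 1 + 1 from rfl, artinDel_succ, artinDel_succ]
  have hcore : artinDel T (i + 2) * T i = T (i + 1) * artinDel T (i + 2) := by
    rw [hdecomp]
    have hci : T (i + 1) * artinDel T i = artinDel T i * T (i + 1) :=
      artin_comm_del T hcomm i (i + 1) (by omega) hik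
    calc artinDel T i * T i * T (i + 1) * T i
        = artinDel T i * (T i * T (i + 1) * T i) := by
          simp only [mul_assoc]
      _ = artinDel T i * (T (i + 1) * T i * T (i + 1)) := by rw [hbraid i hik]
      _ = (artinDel T i * T (i + 1)) * (T i * T (i + 1)) := by simp only [mul_assoc]
      _ = (T (i + 1) * artinDel T i) * (T i * T (i + 1)) := by rw [hci]
      _ = T (i + 1) * (artinDel T i * T i * T (i + 1)) := by simp only [mul_assoc]
  calc artinDel T (i + 2 + r) * T i = artinDel T (i + 2) * (tail * T i) := by
        rw [hsplit, mul_assoc]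
    _ = artinDel T (i + 2) * (T i * tail) := by rw [htc]
    _ = (artinDel T (i + 2) * T i) * tail := by rw [mul_assoc]
    _ = T (i + 1) * (artinDel T (i + 2) * tail) := by rw [hcore, mul_assoc]
    _ = T (i + 1) * artinDel T (i + 2 + r) := by rw [hsplit]

/-- Key square relation: `δ_(m+1)² * T m = T 0 * δ_(m+1)²` for `m ≤ k`. -/
private lemma artin_sq {G : Type*} [Group G] {k : ℕ} (T : ℕ → G)
    (hbraid : ∀ i, i + 1 ≤ k → T i * T (i + 1) * T i = T (i + 1) * T i * T (i + 1))
    (hcomm : ∀ i j, i + 2 ≤ j → j ≤ k → T i * T j = T j * T i) :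
    ∀ m, m ≤ k → artinDel T (m + 1) * artinDel T (m + 1) * T m
        = T 0 * (artinDel T (m + 1) * artinDel T (m + 1))
  | 0, _ => by
      have h1 : artinDel T 1 = T 0 := by simp [artinDel, List.range_succ]
      rw [h1, mul_assoc]
  | m + 1, hm => by
      have ih := artin_sq T hbraid hcomm m (by omega)
      set D : G := artinDel T (m + 1) with hDdef
      set Dm : G := artinDel T m with hDmdef
      set a : G := T m with hadef
      set b : G := T (m + 1) with hbdef
      have hD : D = Dm * a := artinDel_succ T m
      have hD2 : artinDel T (m + 2) = D * b := artinDel_succ T (m + 1)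
      have hcb : b * Dm = Dm * b := artin_comm_del T hcomm m (m + 1) (by omega) hm
      have hab : a * b * a = b * a * b := hbraid m hm
      -- "with continuation" versions
      have hDx : ∀ x : G, Dm * (a * x) = D * x := by
        intro x; rw [hD, mul_assoc]
      have hcb' : ∀ x : G, b * (Dm * x) = Dm * (b * x) := by
        intro x; rw [← mul_assoc, hcb, mul_assoc]
      have hab' : ∀ x : G, a * (b * (a * x)) = b * (a * (b * x)) := by
        intro x; rw [← mul_assoc, ← mul_assoc, hab, mul_assoc, mul_assoc]
      have hab1 : b * (a * b) = a * (b * a) := by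
        rw [← mul_assoc, ← mul_assoc, hab]
      have ih' : ∀ x : G, D * (D * (a * x)) = T 0 * (D * (D * x)) := by
        intro x
        calc D * (D * (a * x)) = (D * D * a) * x := by simp only [mul_assoc]
          _ = (T 0 * (D * D)) * x := by rw [ih]
          _ = T 0 * (D * (D * x)) := by simp only [mul_assoc]
      rw [hD2]
      calc D * b * (D * b) * b
          = D * (b * (Dm * (a * (b * b)))) := by rw [hD]; simp only [mul_assoc]
        _ = D * (Dm * (b * (a * (b * b)))) := by rw [hcb']
        _ = D * (Dm * (a * (b * (a * b)))) := by rw [hab']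
        _ = D * (D * (b * (a * b))) := by rw [hDx]
        _ = D * (D * (a * (b * a))) := by rw [hab1]
        _ = T 0 * (D * (D * (b * a))) := by rw [ih']
        _ = T 0 * (D * (Dm * (a * (b * a)))) := by rw [hDx]
        _ = T 0 * (D * (Dm * (b * (a * b)))) := by rw [hab1]
        _ = T 0 * (D * (b * (Dm * (a * b)))) := by rw [hcb']
        _ = T 0 * (D * b * (D * b)) := by rw [hDx]; simp only [mul_assoc]

theorem even_artin_relation {G : Type*} [Group G] (k : ℕ) (hk : 2 ≤ k) (T : ℕ → G)
    (hbraid : ∀ i, i + 1 ≤ k → T i * T (i + 1) * T i = T (i + 1) * T i * T (i + 1))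
    (hcomm : ∀ i j, i + 2 ≤ j → j ≤ k → T i * T j = T j * T i) :
    altProd (T 0) (((List.range k).map (fun i => T (i + 1))).prod) (2 * k + 4)
      = altProd (((List.range k).map (fun i => T (i + 1))).prod) (T 0) (2 * k + 4) := by
  set x : G := T 0 with hx
  set y : G := ((List.range k).map (fun i => T (i + 1))).prod with hy
  set δ : G := artinDel T (k + 1) with hδ
  have hxy : x * y = δ := by
    simp [hδ, artinDel, List.range_succ_eq_map, List.map_map, Function.comp_def, hy, hx,
      Nat.succ_eq_add_one]
  -- δ^j * T 0 = T j * δ^j for j ≤ k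
  have hq : ∀ j, j ≤ k → δ ^ j * x = T j * δ ^ j := by
    intro j
    induction j with
    | zero => simp [hx]
    | succ n ih =>
        intro hn
        calc δ ^ (n + 1) * x = δ * (δ ^ n * x) := by rw [pow_succ', mul_assoc]
          _ = δ * (T n * δ ^ n) := by rw [ih (by omega)]
          _ = (δ * T n) * δ ^ n := by rw [mul_assoc]
          _ = (T (n + 1) * δ) * δ ^ n := by
              rw [hδ, artin_shift T hbraid hcomm n (k + 1) (by omega) le_rfl]
          _ = T (n + 1) * δ ^ (n + 1) := by rw [mul_assoc, ← pow_succ']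
  -- δ^(k+2) commutes with x
  have hc : δ ^ (k + 2) * x = x * δ ^ (k + 2) := by
    have hpow : δ ^ (k + 2) = δ ^ 2 * δ ^ k := by
      rw [← pow_add]; congr 1; omega
    calc δ ^ (k + 2) * x = δ ^ 2 * (δ ^ k * x) := by rw [hpow, mul_assoc]
      _ = δ ^ 2 * (T k * δ ^ k) := by rw [hq k le_rfl]
      _ = (δ * δ * T k) * δ ^ k := by rw [sq]; simp only [mul_assoc]
      _ = (x * (δ * δ)) * δ ^ k := by
          rw [hδ, artin_sq T hbraid hcomm k le_rfl, hx]
      _ = x * δ ^ (k + 2) := by rw [hpow, sq]; simp only [mul_assoc]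
  have h24 : 2 * k + 4 = 2 * (k + 2) := by ring
  rw [h24, artin_altProd_two_mul, artin_altProd_two_mul, hxy]
  -- remains: δ^(k+2) = (y*x)^(k+2)
  apply mul_left_cancel (a := x)
  calc x * δ ^ (k + 2) = δ ^ (k + 2) * x := hc.symm
    _ = (x * y) ^ (k + 2) * x := by rw [hxy]
    _ = x * (y * x) ^ (k + 2) := artin_conj_pow x y (k + 2)
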